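/- Let N be an odd positive integer. There exists a constant C_P > 0, independent of Δx, such that for all u : ℤ/Nℤ → ℝ with Σ_i Δx u_i = 0, one has ‖u‖₂ ≤ C_P ‖D_x^c u‖₂. -/

import Mathlib

noncomputable def Dc (N : ℕ) (Δx : ℝ) (u : ZMod N → ℝ) (i : ZMod N) : ℝ :=
  (u (i + 1) - u (i - 1)) / (2 * Δx)

noncomputable def Dm (N : ℕ) (Δx : ℝ) (u : ZMod N → ℝ) (i : ZMod N) : ℝ :=
  (u i - u (i - 1)) / Δx

noncomputable def Dp (N : ℕ) (Δx : ℝ) (u : ZMod N → ℝ) (i : ZMod N) : ℝ :=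
  (u (i + 1) - u i) / Δx

noncomputable def ip (N : ℕ) [NeZero N] (Δx : ℝ) (u v : ZMod N → ℝ) : ℝ :=
  ∑ i : ZMod N, Δx * u i * v i

/-- The equivalence between `Fin N` and `ZMod N`. -/
def finZModEquiv (N : ℕ) [NeZero N] : Fin N ≃ ZMod N :=
  { toFun := fun m => ((m : ℕ) : ZMod N)
    invFun := fun j => ⟨j.val, ZMod.val_lt j⟩
    left_inv := fun m => by ext; simp [ZMod.val_natCast_of_lt m.isLt]
    right_inv := fun j => by simp [ZMod.natCast_val, ZMod.cast_id] }

lemma sum_range_zmod (N : ℕ) [NeZero N] (f : ZMod N → ℝ) :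
    ∑ m ∈ Finset.range N, f (m : ZMod N) = ∑ j : ZMod N, f j := by
  rw [← Fin.sum_univ_eq_sum_range (fun m => f (m : ZMod N)) N]
  exact Fintype.sum_bijective (finZModEquiv N) (finZModEquiv N).bijective _ _ (fun _ => rfl)

lemma telescope_zmod (N : ℕ) [NeZero N] (v : ZMod N → ℝ) (k : ZMod N) (r : ℕ) :
    v (k + (r : ZMod N)) - v k = ∑ m ∈ Finset.range r, (v (k + m + 1) - v (k + m)) := by
  induction r with
  | zero => simp
  | succ r ih =>
      rw [Finset.sum_range_succ, ← ih]
      have h : ((r + 1 : ℕ) : ZMod N) = (r : ZMod N) + 1 := by push_cast; ring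
      rw [h, ← add_assoc]
      ring

lemma pointwise_bound (N : ℕ) [NeZero N] (v : ZMod N → ℝ)
    (hmean : ∑ j : ZMod N, v j = 0) (i : ZMod N) :
    |v i| ≤ ∑ j : ZMod N, |v (j + 1) - v j| := by
  set S := ∑ j : ZMod N, |v (j + 1) - v j| with hS
  have hSnn : 0 ≤ S := Finset.sum_nonneg fun _ _ => abs_nonneg _
  have key : ∀ k : ZMod N, |v i - v k| ≤ S := by
    intro k
    have hr : i = k + (((i - k).val : ℕ) : ZMod N) := by
      rw [ZMod.natCast_val, ZMod.cast_id]; ring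
    calc |v i - v k| = |∑ m ∈ Finset.range (i - k).val, (v (k + m + 1) - v (k + m))| := by
          rw [← telescope_zmod N v k (i - k).val, ← hr]
      _ ≤ ∑ m ∈ Finset.range (i - k).val, |v (k + m + 1) - v (k + m)| :=
          Finset.abs_sum_le_sum_abs _ _
      _ ≤ ∑ m ∈ Finset.range N, |v (k + m + 1) - v (k + m)| := by
          apply Finset.sum_le_sum_of_subset_of_nonneg
          · exact Finset.range_subset_range.mpr (le_of_lt (ZMod.val_lt _))
          · intros; exact abs_nonneg _
      _ = ∑ j : ZMod N, |v (k + j + 1) - v (k + j)| :=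
          sum_range_zmod N (fun j => |v (k + j + 1) - v (k + j)|)
      _ = S := by
          rw [hS]
          exact Fintype.sum_bijective (Equiv.addLeft k) (Equiv.addLeft k).bijective _ _
            (fun j => by simp [add_comm])
  have hN : 0 < (N : ℝ) := by
    exact_mod_cast Nat.pos_of_ne_zero (NeZero.ne N)
  have h1 : (N : ℝ) * |v i| = |∑ k : ZMod N, (v i - v k)| := by
    rw [Finset.sum_sub_distrib, hmean, sub_zero, Finset.sum_const, Finset.card_univ,
      ZMod.card, nsmul_eq_mul, abs_mul, Nat.abs_cast]
  have h2 : |∑ k : ZMod N, (v i - v k)| ≤ ∑ k : ZMod N, |v i - v k| :=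
    Finset.abs_sum_le_sum_abs _ _
  have h3 : ∑ k : ZMod N, |v i - v k| ≤ (N : ℝ) * S := by
    calc ∑ k : ZMod N, |v i - v k| ≤ ∑ _k : ZMod N, S := Finset.sum_le_sum fun k _ => key k
      _ = (N : ℝ) * S := by rw [Finset.sum_const, Finset.card_univ, ZMod.card, nsmul_eq_mul]
  nlinarith [h1, h2, h3, abs_nonneg (v i)]

/-- Discrete Poincaré for the forward difference on the torus, squared form. -/
lemma poincare_forward (T : ℝ) (hT : 0 < T) (N : ℕ) [NeZero N] (v : ZMod N → ℝ)
    (hmean : ∑ j : ZMod N, v j = 0) :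
    ∑ j : ZMod N, (T / N) * (v j) ^ 2
      ≤ T ^ 2 * ∑ j : ZMod N, (T / N) * (Dp N (T / N) v j) ^ 2 := by
  have hN : 0 < (N : ℝ) := by exact_mod_cast Nat.pos_of_ne_zero (NeZero.ne N)
  set Δx : ℝ := T / N with hΔx
  have hΔ : 0 < Δx := div_pos hT hN
  set S := ∑ j : ZMod N, |v (j + 1) - v j| with hS
  have hSnn : 0 ≤ S := Finset.sum_nonneg fun _ _ => abs_nonneg _
  have hpt : ∀ i, (v i) ^ 2 ≤ S ^ 2 := fun i => by
    have := pointwise_bound N v hmean i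
    nlinarith [abs_nonneg (v i), sq_abs (v i)]
  have hCS : S ^ 2 ≤ (N : ℝ) * ∑ j : ZMod N, (v (j + 1) - v j) ^ 2 := by
    have := sq_sum_le_card_mul_sum_sq (s := (Finset.univ : Finset (ZMod N)))
      (f := fun j => |v (j + 1) - v j|)
    simp only [sq_abs, Finset.card_univ, ZMod.card] at this
    exact_mod_cast this
  have hdiff : ∀ j, (v (j + 1) - v j) ^ 2 = Δx ^ 2 * (Dp N Δx v j) ^ 2 := fun j => by
    have hne : Δx ≠ 0 := hΔ.ne'
    rw [Dp, div_pow]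
    field_simp [hΔx, hN.ne']
    have hT' : Δx * N = T := div_mul_cancel₀ T hN.ne'
    rw [← hT']
    ring
  have h1 : ∑ j : ZMod N, Δx * (v j) ^ 2 ≤ (N : ℝ) * Δx * S ^ 2 := by
    calc ∑ j : ZMod N, Δx * (v j) ^ 2 ≤ ∑ _j : ZMod N, Δx * S ^ 2 :=
          Finset.sum_le_sum fun j _ => by nlinarith [hpt j, hΔ.le]
      _ = (N : ℝ) * Δx * S ^ 2 := by
          rw [Finset.sum_const, Finset.card_univ, ZMod.card, nsmul_eq_mul]; ring
  have hNΔ : (N : ℝ) * Δx = T := by rw [hΔx]; field_simp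
  have h2 : (N : ℝ) * ∑ j : ZMod N, (v (j + 1) - v j) ^ 2
      = T * ∑ j : ZMod N, Δx * (Dp N Δx v j) ^ 2 := by
    rw [Finset.mul_sum, Finset.mul_sum]
    apply Finset.sum_congr rfl
    intro j _
    rw [hdiff j, ← hNΔ]
    ring
  calc ∑ j : ZMod N, Δx * (v j) ^ 2 ≤ (N : ℝ) * Δx * S ^ 2 := h1
    _ = T * S ^ 2 := by rw [hNΔ]
    _ ≤ T * ((N : ℝ) * ∑ j : ZMod N, (v (j + 1) - v j) ^ 2) := by nlinarith [hCS]
    _ = T ^ 2 * ∑ j : ZMod N, Δx * (Dp N Δx v j) ^ 2 := by rw [h2]; ring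

theorem discrete_poincare_torus (T : ℝ) (hT : 0 < T) :
    ∃ C > 0, ∀ (N : ℕ) [NeZero N], Odd N →
      ∀ u : ZMod N → ℝ, (∑ i : ZMod N, (T / N) * u i) = 0 →
        Real.sqrt (∑ i : ZMod N, (T / N) * (u i) ^ 2)
          ≤ C * Real.sqrt (∑ i : ZMod N, (T / N) * (Dc N (T / N) u i) ^ 2) := by
  refine ⟨2 * T, by linarith, ?_⟩
  intro N _ hodd u hmean
  have hN : 0 < (N : ℝ) := by exact_mod_cast Nat.pos_of_ne_zero (NeZero.ne N)
  set Δx : ℝ := T / N with hΔx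
  have hΔ : 0 < Δx := div_pos hT hN
  -- 2 is a unit mod N
  have hcop : Nat.Coprime 2 N := by
    rw [Nat.prime_two.coprime_iff_not_dvd]
    exact fun h => (Nat.not_even_iff_odd.mpr hodd) ((even_iff_two_dvd).mpr h)
  set u2 : (ZMod N)ˣ := ZMod.unitOfCoprime 2 hcop with hu2
  have hu2v : (u2 : ZMod N) = 2 := by
    rw [hu2, ZMod.coe_unitOfCoprime]; norm_num
  -- the rescaled function
  set v : ZMod N → ℝ := fun j => u (2 * j) with hv
  have hbij : Function.Bijective (fun j : ZMod N => 2 * j) := by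
    have := (Units.mulLeft u2).bijective
    simpa [hu2v] using this
  -- mean of v
  have hmean' : ∑ j : ZMod N, v j = 0 := by
    have h0 : ∑ i : ZMod N, u i = 0 := by
      have := hmean
      rw [← Finset.mul_sum] at this
      rcases mul_eq_zero.mp this with h | h
      · exact absurd h (ne_of_gt hΔ)
      · exact h
    rw [← h0]
    exact Fintype.sum_bijective _ hbij _ _ (fun j => rfl)
  -- norms agree
  have hnorm : ∑ j : ZMod N, Δx * (v j) ^ 2 = ∑ i : ZMod N, Δx * (u i) ^ 2 :=
    Fintype.sum_bijective _ hbij _ _ (fun j => rfl)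
  -- Dc of u reindexed is half the forward difference of v
  have hDc : ∑ i : ZMod N, Δx * (Dc N Δx u i) ^ 2
      = ∑ j : ZMod N, Δx * (Dc N Δx u (2 * j + 1)) ^ 2 := by
    have hbij' : Function.Bijective (fun j : ZMod N => 2 * j + 1) := by
      exact (Equiv.addRight (1 : ZMod N)).bijective.comp hbij
    exact (Fintype.sum_bijective _ hbij' _ _ (fun j => rfl)).symm
  have hkey : ∀ j : ZMod N, Dp N Δx v j = 2 * Dc N Δx u (2 * j + 1) := by
    intro j
    rw [Dp, Dc, hv]
    have e1 : 2 * j + 1 + 1 = 2 * (j + 1) := by ring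
    have e2 : 2 * j + 1 - 1 = 2 * j := by ring
    rw [e1, e2]
    field_simp
  have hDpsum : ∑ j : ZMod N, Δx * (Dp N Δx v j) ^ 2
      = 4 * ∑ i : ZMod N, Δx * (Dc N Δx u i) ^ 2 := by
    rw [hDc, Finset.mul_sum]
    apply Finset.sum_congr rfl
    intro j _
    rw [hkey j]
    ring
  -- apply the forward-difference Poincaré inequality
  have hmain := poincare_forward T hT N v hmean'
  rw [hnorm, hDpsum] at hmain
  -- conclude with square roots
  have hRnn : 0 ≤ ∑ i : ZMod N, Δx * (Dc N Δx u i) ^ 2 :=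
    Finset.sum_nonneg fun i _ => by positivity
  have : ∑ i : ZMod N, Δx * (u i) ^ 2
      ≤ (2 * T) ^ 2 * ∑ i : ZMod N, Δx * (Dc N Δx u i) ^ 2 := by nlinarith [hmain]
  calc Real.sqrt (∑ i : ZMod N, Δx * (u i) ^ 2)
      ≤ Real.sqrt ((2 * T) ^ 2 * ∑ i : ZMod N, Δx * (Dc N Δx u i) ^ 2) :=
        Real.sqrt_le_sqrt this
    _ = (2 * T) * Real.sqrt (∑ i : ZMod N, Δx * (Dc N Δx u i) ^ 2) := by
        rw [Real.sqrt_mul (sq_nonneg _), Real.sqrt_sq (by linarith)]
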